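/- Let p be a prime with p ≡ 1 (mod 4), let s be an odd integer with |s| ≤ p−2, and let K = {2−p, 4−p, …, p−2} (integers of the form 2j−p, 1 ≤ j ≤ p−1, i.e., the even-offset residues). Define K_s = {k ∈ K : there exists an even integer l with |k·s − l·p| < (p−1)/2}. Then |K_s| = (p−1)/2. -/

import Mathlib

open Classical in
theorem stmt_5 (p : ℕ) (hp : p.Prime) (hp4 : p % 4 = 1)
    (s : ℤ) (hs : Odd s) (hb : |s| ≤ (p : ℤ) - 2) :
    (((Finset.range (p - 1)).image (fun j : ℕ => 2 * ((j : ℤ) + 1) - p)).filter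
        (fun k : ℤ => ∃ l : ℤ, Even l ∧ |k * s - l * p| < ((p : ℤ) - 1) / 2)).card
      = (p - 1) / 2 := by
  have h2 := hp.two_le
  have hp5 : 5 ≤ p := by omega
  set u : ℕ := p / 4 with hu'
  have hu : p = 4 * u + 1 := by omega
  have hPu : (p : ℤ) = 4 * (u : ℤ) + 1 := by exact_mod_cast congrArg (Nat.cast : ℕ → ℤ) hu
  have hu1 : 1 ≤ u := by omega
  have hm : ((p : ℤ) - 1) / 2 = 2 * (u : ℤ) := by omega
  have hppos : 0 < 2 * p := by omega
  -- basic facts about bmod at modulus 2*p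
  have hlow : ∀ x : ℤ, -(p : ℤ) ≤ Int.bmod x (2 * p) := by
    intro x
    have h := Int.le_bmod (x := x) hppos
    have : ((2 * p : ℕ) : ℤ) / 2 = (p : ℤ) := by push_cast; omega
    rw [this] at h; exact h
  have hhigh : ∀ x : ℤ, Int.bmod x (2 * p) < (p : ℤ) := by
    intro x
    have h := Int.bmod_lt (x := x) hppos
    have : (((2 * p : ℕ) : ℤ) + 1) / 2 = (p : ℤ) := by push_cast; omega
    rw [this] at h; exact h
  have hdvd : ∀ x : ℤ, (2 * (p : ℤ)) ∣ x - Int.bmod x (2 * p) := by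
    intro x
    have h : Int.bmod x (2 * p) % ((2 * p : ℕ) : ℤ) = x % ((2 * p : ℕ) : ℤ) :=
      Int.bmod_emod
    have h2 : Int.ModEq ((2 * p : ℕ) : ℤ) (Int.bmod x (2 * p)) x := h
    have := h2.dvd
    push_cast at this ⊢
    convert this using 2
  -- uniqueness of representatives in [-p, p)
  have huniq : ∀ x y : ℤ, (2 * (p : ℤ)) ∣ x - y → -(p : ℤ) ≤ x → x < p →
      -(p : ℤ) ≤ y → y < p → x = y := by
    intro x y ⟨c, hc⟩ h1 h2 h3 h4
    have hc1 : c < 1 := by nlinarith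
    have hc2 : -1 < c := by nlinarith
    have : c = 0 := by omega
    rw [this] at hc; omega
  -- oddness is preserved by bmod (2 ∣ 2p)
  have hoddb : ∀ x : ℤ, Odd x → Odd (Int.bmod x (2 * p)) := by
    intro x hx
    obtain ⟨c, hc⟩ := hdvd x
    obtain ⟨t, ht⟩ := hx
    refine ⟨t - (p : ℤ) * c, ?_⟩
    have : Int.bmod x (2 * p) = x - 2 * (p : ℤ) * c := by omega
    rw [this, ht]; ring
  -- coprimality of s with 2p
  have hs0 : s ≠ 0 := by
    rintro rfl
    have := Int.odd_iff.mp hs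
    norm_num at this
  have hcop2 : IsCoprime s 2 := by
    refine ⟨1, -(s / 2), ?_⟩
    have h := Int.mul_ediv_add_emod s 2
    have h2 := Int.odd_iff.mp hs
    linarith
  have hndvd : ¬ ((p : ℤ) ∣ s) := by
    intro h
    have h' : (p : ℤ) ∣ |s| := (dvd_abs _ _).mpr h
    have : (p : ℤ) ≤ |s| := Int.le_of_dvd (abs_pos.mpr hs0) h'
    linarith
  have hcopp : IsCoprime s (p : ℤ) := by
    have hpz : Prime (p : ℤ) := Int.prime_iff_natAbs_prime.mpr (by simpa using hp)
    exact ((hpz.coprime_iff_not_dvd).mpr hndvd).symm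
  have hcop : IsCoprime s (2 * (p : ℤ)) := hcop2.mul_right hcopp
  obtain ⟨a, b, hab⟩ := hcop
  -- the key map
  set f : ℤ → ℤ := fun k => Int.bmod (k * s) (2 * p) with hf
  -- membership in K
  have hK : ∀ k : ℤ,
      (k ∈ (Finset.range (p - 1)).image (fun j : ℕ => 2 * ((j : ℤ) + 1) - p)) ↔
      (Odd k ∧ -(p : ℤ) < k ∧ k < p) := by
    intro k
    simp only [Finset.mem_image, Finset.mem_range]
    constructor
    · rintro ⟨j, hj, rfl⟩
      have hjz : (j : ℤ) < (p : ℤ) - 1 := by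
        have : (j : ℤ) < ((p - 1 : ℕ) : ℤ) := by exact_mod_cast hj
        omega
      refine ⟨⟨(j : ℤ) - 2 * (u : ℤ), by rw [hPu]; ring⟩, by omega, by omega⟩
    · rintro ⟨⟨t, ht⟩, hk1, hk2⟩
      refine ⟨(t + 2 * u).toNat, ?_, ?_⟩ <;> omega
  -- the condition is equivalent to a bound on f k
  have hC : ∀ k : ℤ,
      (∃ l : ℤ, Even l ∧ |k * s - l * p| < ((p : ℤ) - 1) / 2) ↔ |f k| < 2 * (u : ℤ) := by
    intro k
    rw [hm]
    constructor
    · rintro ⟨l, ⟨t, rfl⟩, hlt⟩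
      rw [abs_lt] at hlt
      have hd : (2 * (p : ℤ)) ∣ (k * s - (t + t) * p) - f k := by
        obtain ⟨c, hc⟩ := hdvd (k * s)
        exact ⟨c - t, by rw [hf]; push_cast; linarith [hc]⟩
      have := huniq _ _ hd (by omega) (by omega) (hlow (k * s)) (hhigh (k * s))
      rw [abs_lt]; omega
    · intro h
      rw [abs_lt] at h
      obtain ⟨c, hc⟩ := hdvd (k * s)
      refine ⟨2 * c, ⟨c, by ring⟩, ?_⟩
      have : k * s - (2 * c) * p = f k := by rw [hf]; push_cast; linarith [hc]
      rw [this, abs_lt]; omega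
  -- target set
  set T : Finset ℤ := (Finset.range (2 * u)).image (fun i : ℕ => 2 * (i : ℤ) + 1 - 2 * u)
    with hT'
  have hT : ∀ r : ℤ, r ∈ T ↔ Odd r ∧ -(2 * (u : ℤ)) < r ∧ r < 2 * u := by
    intro r
    simp only [hT', Finset.mem_image, Finset.mem_range]
    constructor
    · rintro ⟨i, hi, rfl⟩
      have : (i : ℤ) < 2 * (u : ℤ) := by exact_mod_cast hi
      exact ⟨⟨(i : ℤ) - u, by ring⟩, by omega, by omega⟩
    · rintro ⟨⟨t, ht⟩, h1, h2⟩
      refine ⟨(t + u).toNat, ?_, ?_⟩ <;> omega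
  have hTcard : T.card = 2 * u := by
    rw [hT', Finset.card_image_of_injOn, Finset.card_range]
    intro i _ j _ hij
    have hij' : 2 * (i : ℤ) + 1 - 2 * u = 2 * (j : ℤ) + 1 - 2 * u := hij
    have : (i : ℤ) = j := by omega
    exact_mod_cast this
  -- main bijection
  rw [show (p - 1) / 2 = 2 * u by omega, ← hTcard]
  apply Finset.card_nbij f
  · intro k hk
    rw [Finset.mem_coe, Finset.mem_filter] at hk
    obtain ⟨hkK, hkC⟩ := hk
    rw [hK] at hkK
    rw [hC] at hkC
    rw [Finset.mem_coe, hT]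
    have hodd : Odd (f k) := hoddb _ (hkK.1.mul hs)
    rw [abs_lt] at hkC
    exact ⟨hodd, hkC.1, hkC.2⟩
  · intro k1 hk1 k2 hk2 hfk
    simp only [Finset.coe_filter, Set.mem_setOf_eq] at hk1 hk2
    rw [hK] at hk1 hk2
    obtain ⟨c1, hc1⟩ := hdvd (k1 * s)
    obtain ⟨c2, hc2⟩ := hdvd (k2 * s)
    have hds : (2 * (p : ℤ)) ∣ (k1 - k2) * s := by
      refine ⟨c1 - c2, ?_⟩
      have : f k1 = f k2 := hfk
      rw [hf] at this
      have e1 : k1 * s - Int.bmod (k1 * s) (2 * p) = 2 * (p : ℤ) * c1 := hc1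
      have e2 : k2 * s - Int.bmod (k2 * s) (2 * p) = 2 * (p : ℤ) * c2 := hc2
      nlinarith [e1, e2]
    have hdk : (2 * (p : ℤ)) ∣ (k1 - k2) := by
      obtain ⟨c, hc⟩ := hds
      refine ⟨a * c + (k1 - k2) * b, ?_⟩
      have h9 : (k1 - k2) * (a * s + b * (2 * (p : ℤ))) = k1 - k2 := by rw [hab]; ring
      linear_combination a * hc - h9
    exact huniq k1 k2 hdk (by omega) (by omega) (by omega) (by omega)
  · intro r hr
    rw [Finset.mem_coe, hT] at hr
    obtain ⟨hrodd, hr1, hr2⟩ := hr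
    set k : ℤ := Int.bmod (a * r) (2 * p) with hk'
    have hkc : (2 * (p : ℤ)) ∣ a * r - k := hdvd (a * r)
    -- k * s ≡ r mod 2p
    have hks : (2 * (p : ℤ)) ∣ k * s - r := by
      obtain ⟨c, hc⟩ := hkc
      refine ⟨-c * s - r * b, ?_⟩
      have h1 : k = a * r - 2 * (p : ℤ) * c := by omega
      have h2 : a * s = 1 - b * (2 * (p : ℤ)) := by linarith [hab]
      calc k * s - r = (a * r - 2 * (p : ℤ) * c) * s - r := by rw [h1]
        _ = r * (a * s) - 2 * (p : ℤ) * c * s - r := by ring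
        _ = r * (1 - b * (2 * (p : ℤ))) - 2 * (p : ℤ) * c * s - r := by rw [h2]
        _ = 2 * (p : ℤ) * (-c * s - r * b) := by ring
    -- f k = r
    have hfk : f k = r := by
      have hd : (2 * (p : ℤ)) ∣ f k - r := by
        obtain ⟨c1, hc1⟩ := hdvd (k * s)
        obtain ⟨c2, hc2⟩ := hks
        exact ⟨c2 - c1, by rw [hf]; linarith [hc1, hc2]⟩
      exact huniq _ _ hd (hlow _) (hhigh _) (by omega) (by omega)
    -- k odd
    have hko : Odd k := by
      obtain ⟨c, hc⟩ := hks
      obtain ⟨t, ht⟩ := hrodd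
      obtain ⟨w, hw⟩ := hs
      -- k * s = r + 2pc, s odd, r odd => k odd
      rcases Int.even_or_odd k with hke | hko
      · exfalso
        obtain ⟨v, hv⟩ := hke
        have : (2 : ℤ) ∣ 1 := by
          refine ⟨v * s - t - (p : ℤ) * c - ((t : ℤ) + (p : ℤ) * c) * 0, ?_⟩
          have : k * s - r = 2 * (p : ℤ) * c := hc
          rw [hv, ht] at this
          linarith
        norm_num at this
      · exact hko
    -- k ≠ -p
    have hknp : k ≠ -(p : ℤ) := by
      intro hkp
      have hpr : (p : ℤ) ∣ r := by
        obtain ⟨c, hc⟩ := hks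
        refine ⟨-s - 2 * c, ?_⟩
        rw [hkp] at hc
        linarith
      have hr0 : r ≠ 0 := by
        rintro rfl
        have := Int.odd_iff.mp hrodd
        norm_num at this
      have h6 : (p : ℤ) ≤ |r| := Int.le_of_dvd (abs_pos.mpr hr0) ((dvd_abs _ _).mpr hpr)
      have h5 : |r| < 2 * (u : ℤ) := abs_lt.mpr ⟨hr1, hr2⟩
      omega
    have hkb1 : -(p : ℤ) ≤ k := hlow _
    have hkb2 : k < p := hhigh _
    refine ⟨k, ?_, hfk⟩
    rw [Finset.mem_coe, Finset.mem_filter, hK, hC, hfk]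
    exact ⟨⟨hko, by omega, hkb2⟩, by rw [abs_lt]; omega⟩
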